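/- For any single site x in a finite interval I ⊂ ℤ and any σ : ℤ → {-1,+1} with x ∈ I⁻(σ) and |I⁻(σ)| ≤ |I⁺(σ)| = m' (setting m = |I⁻(σ)|), one has ∑_{y ∈ I⁺(σ)} |x-y|^{-α} ≥ ∑_{k=m+1}^{2m} k^{-α}, since the multiset of distances {|x-y| : y ∈ I⁺(σ)} is dominated by {m+1, ..., |I|}. -/

import Mathlib

theorem stmt1 (α : ℝ) (hα : 1 < α) (a b : ℤ) (σ : ℤ → ℤ)
    (hσ : ∀ z, σ z = 1 ∨ σ z = -1) (x : ℤ)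
    (hx : x ∈ (Finset.Icc a b).filter (fun z => σ z = -1))
    (m : ℕ) (hm : m = ((Finset.Icc a b).filter (fun z => σ z = -1)).card)
    (hle : ((Finset.Icc a b).filter (fun z => σ z = -1)).card
            ≤ ((Finset.Icc a b).filter (fun z => σ z = 1)).card) :
    ∑ k ∈ Finset.Icc (m + 1) (2 * m), (k : ℝ) ^ (-α) ≤
      ∑ y ∈ (Finset.Icc a b).filter (fun z => σ z = 1),
        |(x : ℝ) - (y : ℝ)| ^ (-α) := by
  classical
  set S := (Finset.Icc a b).filter (fun z => σ z = 1) with hS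
  set N := (Finset.Icc a b).filter (fun z => σ z = -1) with hN
  simp only [hN, Finset.mem_filter, Finset.mem_Icc] at hx
  obtain ⟨⟨hax, hxb⟩, hσx⟩ := hx
  have hxS : ∀ y ∈ S, y ≠ x := by
    intro y hy hyx; subst hyx
    simp only [hS, Finset.mem_filter] at hy
    omega
  set e : ℤ → ℕ := fun y => if x < y then 2 * (y - x).natAbs else 2 * (x - y).natAbs - 1
    with he
  have heInj : ∀ y₁ ∈ S, ∀ y₂ ∈ S, e y₁ = e y₂ → y₁ = y₂ := by
    intro y1 h1 y2 h2 heq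
    have n1 := hxS y1 h1; have n2 := hxS y2 h2
    simp only [he] at heq
    split_ifs at heq <;> omega
  have heD : ∀ y ∈ S, (e y + 1) / 2 = (x - y).natAbs := by
    intro y hy
    have := hxS y hy
    simp only [he]; split_ifs <;> omega
  have hmS : m ≤ S.card := hm ▸ hle
  -- |I| ≥ 2m
  have hdisj : Disjoint N S := by
    rw [Finset.disjoint_left]
    intro z hz1 hz2
    simp only [hN, hS, Finset.mem_filter] at hz1 hz2
    omega
  have hIcard : m + m ≤ (Finset.Icc a b).card := by
    calc m + m ≤ N.card + S.card := by omega
    _ = (N ∪ S).card := (Finset.card_union_of_disjoint hdisj).symm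
    _ ≤ (Finset.Icc a b).card := Finset.card_le_card
        (Finset.union_subset (Finset.filter_subset _ _) (Finset.filter_subset _ _))
  have h2m : 2 * (m : ℤ) ≤ b - a + 1 := by
    rw [Int.card_Icc] at hIcard
    omega
  -- counting lemma for positive sites near x
  have hcount : ∀ j : ℕ, j < m →
      j + 1 ≤ (S.filter (fun y => (x - y).natAbs ≤ m + j + 1)).card := by
    intro j hj
    set D : ℤ := (m : ℤ) + j + 1 with hD
    set W := Finset.Icc (max a (x - D)) (min b (x + D)) with hW
    have hWsub : W.filter (fun z => σ z = 1) ⊆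
        S.filter (fun y => (x - y).natAbs ≤ m + j + 1) := by
      intro z hz
      simp only [hW, hS, Finset.mem_filter, Finset.mem_Icc, le_min_iff, max_le_iff] at hz ⊢
      refine ⟨⟨⟨?_, ?_⟩, hz.2⟩, ?_⟩ <;> omega
    have hWcard : (m : ℤ) + j + 1 ≤ (W.card : ℤ) := by
      rw [hW, Int.card_Icc]
      rcases le_total a (x - D) with h1 | h1 <;> rcases le_total b (x + D) with h2 | h2 <;>
        simp [max_eq_left, max_eq_right, min_eq_left, min_eq_right, h1, h2] <;> omega
    have hfeq : W.filter (fun z => ¬ σ z = 1) = W.filter (fun z => σ z = -1) :=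
      Finset.filter_congr (by intro z _; rcases hσ z with h | h <;> simp [h])
    have hsplit := Finset.card_filter_add_card_filter_not (s := W)
      (p := fun z => σ z = 1)
    rw [hfeq] at hsplit
    have hneg : (W.filter (fun z => σ z = -1)).card ≤ m := by
      rw [hm]
      apply Finset.card_le_card
      intro z hz
      simp only [hW, hN, Finset.mem_filter, Finset.mem_Icc, le_min_iff, max_le_iff] at hz ⊢
      exact ⟨⟨by omega, by omega⟩, hz.2⟩
    have hcc := Finset.card_le_card hWsub
    omega
  -- transfer to the encoded set T
  set T := S.image e with hT
  have hTS : T.card = S.card := Finset.card_image_of_injOn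
    (fun y1 h1 y2 h2 => heInj y1 (Finset.mem_coe.mp h1) y2 (Finset.mem_coe.mp h2))
  have hmn : m ≤ T.card := by omega
  have hTcount : ∀ j : ℕ, j < m →
      j + 1 ≤ (T.filter (fun t => t ≤ 2 * (m + j + 1))).card := by
    intro j hj
    have himg : T.filter (fun t => t ≤ 2 * (m + j + 1)) =
        (S.filter (fun y => (x - y).natAbs ≤ m + j + 1)).image e := by
      ext t
      simp only [hT, Finset.mem_filter, Finset.mem_image]
      constructor
      · rintro ⟨⟨y, hy, rfl⟩, hl⟩
        exact ⟨y, ⟨hy, by have hd := heD y hy; omega⟩, rfl⟩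
      · rintro ⟨y, ⟨hy, hl⟩, rfl⟩
        exact ⟨⟨y, hy, rfl⟩, by have hd := heD y hy; omega⟩
    rw [himg, Finset.card_image_of_injOn (fun y1 h1 y2 h2 => heInj y1
      (Finset.filter_subset _ _ (Finset.mem_coe.mp h1)) y2
      (Finset.filter_subset _ _ (Finset.mem_coe.mp h2)))]
    exact hcount j hj
  -- sorted elements of T
  set f := T.orderIsoOfFin rfl with hf
  set F : Fin m → ℕ := fun j => (f (Fin.castLE hmn j) : ℕ) with hF
  have hFmem : ∀ j, F j ∈ T := fun j => (f (Fin.castLE hmn j)).2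
  have hFinj : Function.Injective F := by
    intro j1 j2 hj
    have : f (Fin.castLE hmn j1) = f (Fin.castLE hmn j2) := Subtype.ext hj
    have := f.injective this
    exact Fin.castLE_injective hmn this
  have hkey : ∀ j : Fin m, F j ≤ 2 * (m + (j : ℕ) + 1) := by
    intro j
    by_contra hcon
    push_neg at hcon
    have hsub : T.filter (fun t => t ≤ 2 * (m + (j : ℕ) + 1)) ⊆
        (Finset.Iio (Fin.castLE hmn j)).image (fun i => (f i : ℕ)) := by
      intro t ht
      simp only [Finset.mem_filter] at ht
      obtain ⟨htT, hlt⟩ := ht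
      obtain ⟨i, hi⟩ := f.surjective ⟨t, htT⟩
      refine Finset.mem_image.mpr ⟨i, ?_, by rw [hi]⟩
      rw [Finset.mem_Iio]
      by_contra hge
      push_neg at hge
      have hmono := f.monotone hge
      have h1 : (f (Fin.castLE hmn j) : ℕ) ≤ (f i : ℕ) := hmono
      rw [hi] at h1
      have h1' : (f (Fin.castLE hmn j) : ℕ) ≤ t := h1
      simp only [hF] at hcon
      omega
    have hc1 := Finset.card_le_card hsub
    have hc2 : ((Finset.Iio (Fin.castLE hmn j)).image (fun i => (f i : ℕ))).card ≤ (j : ℕ) := by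
      calc ((Finset.Iio (Fin.castLE hmn j)).image (fun i => (f i : ℕ))).card
          ≤ (Finset.Iio (Fin.castLE hmn j)).card := Finset.card_image_le
      _ = (j : ℕ) := Fin.card_Iio _
    have hc3 := hTcount j j.isLt
    omega
  -- the weight function
  set g : ℕ → ℝ := fun t => (((t + 1) / 2 : ℕ) : ℝ) ^ (-α) with hg
  have hepos : ∀ y ∈ S, 1 ≤ e y := by
    intro y hy
    have := hxS y hy
    simp only [he]; split_ifs <;> omega
  have hTpos : ∀ t ∈ T, 1 ≤ t := by
    intro t ht
    simp only [hT, Finset.mem_image] at ht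
    obtain ⟨y, hy, rfl⟩ := ht
    exact hepos y hy
  -- chain of inequalities
  have hsum1 : ∑ y ∈ S, |(x : ℝ) - (y : ℝ)| ^ (-α) = ∑ t ∈ T, g t := by
    rw [hT, Finset.sum_image heInj]
    apply Finset.sum_congr rfl
    intro y hy
    have hd := heD y hy
    simp only [hg, hd]
    congr 1
    rw [Nat.cast_natAbs]
    push_cast
    ring_nf
  have hsum2 : ∑ j : Fin m, g (F j) ≤ ∑ t ∈ T, g t := by
    rw [← Finset.sum_image (fun j _ i _ h => hFinj h)]
    apply Finset.sum_le_sum_of_subset_of_nonneg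
    · intro t ht
      simp only [Finset.mem_image] at ht
      obtain ⟨j, _, rfl⟩ := ht
      exact hFmem j
    · intro t _ _
      simp only [hg]
      positivity
  have hsum3 : ∑ k ∈ Finset.Icc (m + 1) (2 * m), (k : ℝ) ^ (-α) ≤ ∑ j : Fin m, g (F j) := by
    rw [← Finset.Ico_add_one_right_eq_Icc, Finset.sum_Ico_eq_sum_range]
    have hr : 2 * m + 1 - (m + 1) = m := by omega
    rw [hr, ← Fin.sum_univ_eq_sum_range]
    apply Finset.sum_le_sum
    intro j _
    have hkj := hkey j
    have h1 : 1 ≤ (F j + 1) / 2 := by have := hTpos _ (hFmem j); omega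
    have h2 : (F j + 1) / 2 ≤ m + 1 + (j : ℕ) := by omega
    simp only [hg]
    apply Real.rpow_le_rpow_of_nonpos
    · positivity
    · exact_mod_cast h2
    · linarith
  calc ∑ k ∈ Finset.Icc (m + 1) (2 * m), (k : ℝ) ^ (-α)
      ≤ ∑ j : Fin m, g (F j) := hsum3
    _ ≤ ∑ t ∈ T, g t := hsum2
    _ = ∑ y ∈ S, |(x : ℝ) - (y : ℝ)| ^ (-α) := hsum1.symm
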